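/- If r_1 ≥ r_2 ≥ r_3 ≥ r_4 > 0 and 1/r_4 ≤ 1/(r_1+r_4) + 1/(r_2+r_4) + 1/(r_3+r_4), then for every permutation (i,j,k,l) of (1,2,3,4): 1/r_l ≤ 1/(r_i+r_l) + 1/(r_j+r_l) + 1/(r_k+r_l). Equivalently, the hypothesis is equivalent to r_1 r_2 r_3 ≤ (r_1+r_2+r_3+r_4+r_4)·r_4². -/
import Mathlib

lemma key16 (a b c d : ℝ) (ha : 0 < a) (hb : 0 < b) (hc : 0 < c) (hd : 0 < d) :
    1 / d ≤ 1 / (a + d) + 1 / (b + d) + 1 / (c + d) ↔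
      a * b * c ≤ (a + b + c + d + d) * d ^ 2 := by
  have h1 : 0 < a + d := by linarith
  have h2 : 0 < b + d := by linarith
  have h3 : 0 < c + d := by linarith
  rw [div_add_div _ _ h1.ne' h2.ne', div_add_div _ _ (mul_pos h1 h2).ne' h3.ne',
    div_le_div_iff₀ hd (mul_pos (mul_pos h1 h2) h3)]
  constructor <;> intro h <;> nlinarith [mul_pos hd hd, mul_pos ha hb, mul_pos hb hc,
    mul_pos ha hc, sq_nonneg d]

/-- Lemma 3.2: if `r 0 ≥ r 1 ≥ r 2 ≥ r 3 > 0` and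
`1/r₄ ≤ 1/(r₁+r₄) + 1/(r₂+r₄) + 1/(r₃+r₄)`, then the analogous inequality holds
for every permutation of the indices; moreover the hypothesis is equivalent to
`r₁ r₂ r₃ ≤ (r₁+r₂+r₃+r₄+r₄)·r₄²`. -/
theorem stmt_16 (r : Fin 4 → ℝ)
    (hpos : ∀ i, 0 < r i) (hmono : ∀ i j : Fin 4, i ≤ j → r j ≤ r i) :
    ((1 / r 3 ≤ 1 / (r 0 + r 3) + 1 / (r 1 + r 3) + 1 / (r 2 + r 3)) →
      ∀ σ : Equiv.Perm (Fin 4),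
        1 / r (σ 3) ≤ 1 / (r (σ 0) + r (σ 3)) + 1 / (r (σ 1) + r (σ 3)) +
          1 / (r (σ 2) + r (σ 3))) ∧
    ((1 / r 3 ≤ 1 / (r 0 + r 3) + 1 / (r 1 + r 3) + 1 / (r 2 + r 3)) ↔
      r 0 * r 1 * r 2 ≤ (r 0 + r 1 + r 2 + r 3 + r 3) * (r 3) ^ 2) := by
  have h0 := hpos 0
  have h1 := hpos 1
  have h2 := hpos 2
  have h3 := hpos 3
  have hiff := key16 (r 0) (r 1) (r 2) (r 3) h0 h1 h2 h3
  refine ⟨?_, hiff⟩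
  intro hhyp σ
  have hP : r 0 * r 1 * r 2 ≤ (r 0 + r 1 + r 2 + r 3 + r 3) * r 3 ^ 2 := hiff.mp hhyp
  have hsum : r (σ 0) + r (σ 1) + r (σ 2) + r (σ 3) = r 0 + r 1 + r 2 + r 3 := by
    have := Equiv.sum_comp σ r
    simpa [Fin.sum_univ_four] using this
  have hprod : r (σ 0) * r (σ 1) * r (σ 2) * r (σ 3) = r 0 * r 1 * r 2 * r 3 := by
    have := Equiv.prod_comp σ r
    simpa [Fin.prod_univ_four] using this
  have hd : r 3 ≤ r (σ 3) := hmono (σ 3) 3 (Fin.le_last _)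
  have hσ0 := hpos (σ 0); have hσ1 := hpos (σ 1); have hσ2 := hpos (σ 2); have hσ3 := hpos (σ 3)
  rw [key16 _ _ _ _ hσ0 hσ1 hσ2 hσ3]
  -- need: r σ0 * r σ1 * r σ2 ≤ (sum + r σ3) * (r σ3)^2
  have goal' : r (σ 0) * r (σ 1) * r (σ 2) * r (σ 3) ≤
      (r (σ 0) + r (σ 1) + r (σ 2) + r (σ 3) + r (σ 3)) * r (σ 3) ^ 2 * r (σ 3) := by
    rw [hprod, hsum]
    have step1 : r 0 * r 1 * r 2 * r 3 ≤ (r 0 + r 1 + r 2 + r 3 + r 3) * r 3 ^ 2 * r 3 := by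
      nlinarith [mul_pos (mul_pos h0 h1) h2]
    have hx3 : r 3 ^ 3 ≤ r (σ 3) ^ 3 := pow_le_pow_left₀ h3.le hd 3
    have hx4 : r 3 ^ 4 ≤ r (σ 3) ^ 4 := pow_le_pow_left₀ h3.le hd 4
    have hS : (0:ℝ) ≤ r 0 + r 1 + r 2 + r 3 := by linarith
    have step2 : (r 0 + r 1 + r 2 + r 3 + r 3) * r 3 ^ 2 * r 3 ≤
        (r 0 + r 1 + r 2 + r 3 + r (σ 3)) * r (σ 3) ^ 2 * r (σ 3) := by
      nlinarith [mul_le_mul_of_nonneg_left hx3 hS]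
    linarith
  nlinarith [goal', mul_pos (mul_pos hσ0 hσ1) hσ2]
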